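/- Let P = conv(u_0, u_1, u_2, u_3, u_4) ⊆ ℝ^4 be a full-dimensional lattice simplex with lattice length l(P) ≥ 3 such that no edge of P has lattice length 5. Suppose l_{01}, l_{02} ∈ {4, 8}, l_{03} = 11, and l_{04} ∈ {7, 11, 14, 17}. Let t = (0, 0, 0, 1) and t′ = (0, 0, 1, 0). Then P = (⋃_{i=0}^4 P_{i,3}) ∪ P_{0,4} ∪ P_{0,3,t} ∪ P_{0,3,t′}. -/

import Mathlib

open Finset Pointwise

noncomputable section

/-- The real point corresponding to a lattice point. -/
def toR {n : ℕ} (v : Fin n → ℤ) : Fin n → ℝ := fun x => (v x : ℝ)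

/-- The lattice simplex (as a subset of `ℝ^n`) with the given lattice vertices. -/
def lsimplex {n m : ℕ} (u : Fin m → Fin n → ℤ) : Set (Fin n → ℝ) :=
  convexHull ℝ (Set.range fun i => toR (u i))

/-- The lattice length `l_{ij}` of the edge `u_i u_j`:
the gcd of the coordinates of `u_j - u_i`. -/
def latLen {n m : ℕ} (u : Fin m → Fin n → ℤ) (i j : Fin m) : ℕ :=
  Finset.univ.gcd fun x => (u j x - u i x).natAbs

/-- `r_{ij,k}`: the least nonnegative residue of `l_{ij}` modulo `k`. -/
def rmod {n m : ℕ} (u : Fin m → Fin n → ℤ) (i j : Fin m) (k : ℕ) : ℕ :=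
  latLen u i j % k

/-- The vertices of the `k`-dilation `P_{i,k}`: the vertex `u_i` together with, for `j ≠ i`,
the points `((l_{ij} - r_{ij,k})/l_{ij})·u_j + (r_{ij,k}/l_{ij})·u_i`. -/
def dilVert {n m : ℕ} (u : Fin m → Fin n → ℤ) (i : Fin m) (k : ℕ) (j : Fin m) :
    Fin n → ℝ :=
  if j = i then toR (u i)
  else
    ((((latLen u i j : ℝ) - (rmod u i j k : ℝ)) / (latLen u i j : ℝ)) • toR (u j))
      + (((rmod u i j k : ℝ) / (latLen u i j : ℝ)) • toR (u i))

/-- The `k`-dilation `P_{i,k}`. -/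
def dil {n m : ℕ} (u : Fin m → Fin n → ℤ) (i : Fin m) (k : ℕ) : Set (Fin n → ℝ) :=
  convexHull ℝ (Set.range (dilVert u i k))

/-- The primitive edge vector `ũ_{ij} = (u_j - u_i)/l_{ij}`. -/
def primVec {n m : ℕ} (u : Fin m → Fin n → ℤ) (i j : Fin m) : Fin n → ℝ :=
  (latLen u i j : ℝ)⁻¹ • (toR (u j) - toR (u i))

/-- The translated `k`-dilation `P_{i,k,t} = P_{i,k} + Σ_{j ≠ i} t_j ũ_{ij}`. -/
def dilT {n m : ℕ} (u : Fin m → Fin n → ℤ) (i : Fin m) (k : ℕ) (t : Fin m → ℕ) :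
    Set (Fin n → ℝ) :=
  (fun y => y + ∑ j ∈ Finset.univ.erase i, (t j : ℝ) • primVec u i j) '' dil u i k

/-! ### Infrastructure lemmas -/

/-- Convex hull membership for a finite family, as existence of weights. -/
lemma mem_hull_iff {m n : ℕ} (v : Fin m → (Fin n → ℝ)) (x : Fin n → ℝ) :
    x ∈ convexHull ℝ (Set.range v) ↔
      ∃ w : Fin m → ℝ, (∀ i, 0 ≤ w i) ∧ ∑ i, w i = 1 ∧ ∑ i, w i • v i = x := by
  rw [convexHull_range_eq_exists_affineCombination]
  constructor
  · rintro ⟨s, w, h0, h1, rfl⟩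
    refine ⟨fun i => if i ∈ s then w i else 0, fun i => ?_, ?_, ?_⟩
    · by_cases h : i ∈ s <;> simp [h, h0 i]
    · rw [Finset.sum_ite_mem, Finset.univ_inter, h1]
    · rw [Finset.affineCombination_eq_linear_combination s v w h1]
      rw [show ∀ (f : Fin m → Fin n → ℝ),
            (∑ i, (if i ∈ s then w i else 0) • f i) = ∑ i, (if i ∈ s then w i • f i else 0)
          from fun f => by congr 1; funext i; split <;> simp]
      rw [Finset.sum_ite_mem, Finset.univ_inter]
  · rintro ⟨w, h0, h1, rfl⟩
    exact ⟨Finset.univ, w, fun i _ => h0 i, h1,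
      Finset.affineCombination_eq_linear_combination _ v w h1⟩

lemma latLen_symm {n m : ℕ} (u : Fin m → Fin n → ℤ) (i j : Fin m) :
    latLen u i j = latLen u j i := by
  unfold latLen
  congr 1
  ext x
  rw [← neg_sub, Int.natAbs_neg]

lemma rmod_lt3 {n m : ℕ} (u : Fin m → Fin n → ℤ) (i j : Fin m)
    (h : 3 ≤ latLen u i j) : rmod u i j 3 < latLen u i j :=
  lt_of_lt_of_le (Nat.mod_lt _ (by norm_num)) h

/-- parity of latLen via congruence of the vertices mod 2 -/
lemma two_dvd_latLen_iff {n m : ℕ} (u : Fin m → Fin n → ℤ) (i j : Fin m) :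
    2 ∣ latLen u i j ↔ ∀ x, (2:ℤ) ∣ (u j x - u i x) := by
  unfold latLen
  constructor
  · intro h x
    have h2 : (2:ℕ) ∣ (u j x - u i x).natAbs :=
      h.trans (Finset.gcd_dvd (Finset.mem_univ x))
    exact Int.natAbs_dvd_natAbs.mp (by simpa using h2)
  · intro h
    refine Finset.dvd_gcd fun x _ => ?_
    simpa using Int.natAbs_dvd_natAbs.mpr (h x)

lemma parity3 {n m : ℕ} (u : Fin m → Fin n → ℤ) (a b c : Fin m)
    (h1 : 2 ∣ latLen u a b) (h2 : ¬ 2 ∣ latLen u a c) : ¬ 2 ∣ latLen u b c := by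
  intro h
  apply h2
  rw [two_dvd_latLen_iff] at h1 h ⊢
  intro x
  have := dvd_add (h x) (h1 x)
  simpa [sub_add_sub_cancel] using this

/-- coefficient bound 4/3 -/
lemma c43 (l : ℕ) (h3 : 3 ≤ l) (h5 : l ≠ 5) :
    (l : ℝ) / ((l : ℝ) - ((l % 3 : ℕ) : ℝ)) ≤ 4/3 := by
  have hm : 4 * (l % 3) ≤ l := by
    have h := Nat.mod_lt l (show 0 < 3 by norm_num)
    interval_cases h' : l % 3 <;> omega
  have hml : l % 3 < l := by omega
  have hpos : (0:ℝ) < (l:ℝ) - ((l % 3 : ℕ):ℝ) := by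
    have := (Nat.cast_lt (α := ℝ)).mpr hml
    linarith
  rw [div_le_iff₀ hpos]
  have h4 : ((4 * (l % 3) : ℕ) : ℝ) ≤ (l : ℝ) := Nat.cast_le.mpr hm
  push_cast at h4
  linarith

/-- coefficient bound 11/9 for odd lengths -/
lemma c119 (l : ℕ) (h3 : 3 ≤ l) (h5 : l ≠ 5) (hodd : ¬ 2 ∣ l) :
    (l : ℝ) / ((l : ℝ) - ((l % 3 : ℕ) : ℝ)) ≤ 11/9 := by
  have hm : 11 * (l % 3) ≤ 2 * l := by
    have h := Nat.mod_lt l (show 0 < 3 by norm_num)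
    interval_cases h' : l % 3 <;> omega
  have hml : l % 3 < l := by omega
  have hpos : (0:ℝ) < (l:ℝ) - ((l % 3 : ℕ):ℝ) := by
    have := (Nat.cast_lt (α := ℝ)).mpr hml
    linarith
  rw [div_le_iff₀ hpos]
  have h4 : ((11 * (l % 3) : ℕ) : ℝ) ≤ ((2 * l : ℕ) : ℝ) := Nat.cast_le.mpr hm
  push_cast at h4
  linarith

/-! ### Membership and subset lemmas for dilations -/

lemma den_pos {n m : ℕ} (u : Fin m → Fin n → ℤ) (i j : Fin m) (k : ℕ)
    (h : rmod u i j k < latLen u i j) :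
    (0:ℝ) < (latLen u i j : ℝ) - (rmod u i j k : ℝ) := by
  have := (Nat.cast_lt (α := ℝ)).mpr h
  linarith

/-- Sufficiency criterion for membership in `dil u i k`. -/
lemma mem_dil {n m : ℕ} (u : Fin m → Fin n → ℤ) (i : Fin m) (k : ℕ)
    (hLr : ∀ j, j ≠ i → rmod u i j k < latLen u i j)
    (lam : Fin m → ℝ) (h0 : ∀ j, 0 ≤ lam j) (h1 : ∑ j, lam j = 1)
    (hcov : ∑ j ∈ Finset.univ.erase i,
        (latLen u i j : ℝ) / ((latLen u i j : ℝ) - (rmod u i j k : ℝ)) * lam j ≤ 1) :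
    (∑ j, lam j • toR (u j)) ∈ dil u i k := by
  classical
  set c : Fin m → ℝ :=
    fun j => (latLen u i j : ℝ) / ((latLen u i j : ℝ) - (rmod u i j k : ℝ)) with hc
  have hden : ∀ j, j ≠ i → (0:ℝ) < (latLen u i j : ℝ) - (rmod u i j k : ℝ) :=
    fun j hj => den_pos u i j k (hLr j hj)
  have hLpos : ∀ j, j ≠ i → (0:ℝ) < (latLen u i j : ℝ) := by
    intro j hj
    have h1 := hden j hj
    have h2 : (0:ℝ) ≤ (rmod u i j k : ℝ) := Nat.cast_nonneg _
    linarith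
  set w : Fin m → ℝ := fun j =>
    if j = i then 1 - ∑ j' ∈ Finset.univ.erase i, c j' * lam j' else c j * lam j with hw
  have hw0 : ∀ j, 0 ≤ w j := by
    intro j
    by_cases hj : j = i
    · simp only [hw, hj, if_pos rfl]
      linarith [hcov]
    · simp only [hw, if_neg hj]
      exact mul_nonneg (div_nonneg (Nat.cast_nonneg _) (le_of_lt (hden j hj))) (h0 j)
  have herase : ∀ (f : Fin m → ℝ), ∑ j, f j = f i + ∑ j ∈ Finset.univ.erase i, f j :=
    fun f => (Finset.add_sum_erase _ f (Finset.mem_univ i)).symm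
  have hw1 : ∑ j, w j = 1 := by
    rw [herase w]
    have : ∑ j ∈ Finset.univ.erase i, w j = ∑ j ∈ Finset.univ.erase i, c j * lam j :=
      Finset.sum_congr rfl fun j hj => by
        simp only [hw, if_neg (Finset.ne_of_mem_erase hj)]
    rw [this]
    simp only [hw, if_pos rfl]
    ring
  have key : ∑ j, w j • dilVert u i k j = ∑ j, lam j • toR (u j) := by
    have herase' : ∀ (f : Fin m → Fin n → ℝ),
        ∑ j, f j = f i + ∑ j ∈ Finset.univ.erase i, f j :=
      fun f => (Finset.add_sum_erase _ f (Finset.mem_univ i)).symm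
    rw [herase' (fun j => w j • dilVert u i k j),
        herase' (fun j => lam j • toR (u j))]
    have hterm : ∀ j ∈ Finset.univ.erase i,
        w j • dilVert u i k j = lam j • toR (u j) + ((c j - 1) * lam j) • toR (u i) := by
      intro j hj
      have hji : j ≠ i := Finset.ne_of_mem_erase hj
      have hL0 : (latLen u i j : ℝ) ≠ 0 := ne_of_gt (hLpos j hji)
      have hd0 : (latLen u i j : ℝ) - (rmod u i j k : ℝ) ≠ 0 := ne_of_gt (hden j hji)
      have hL := latLen u i j
      have e1 : c j * lam j * (((latLen u i j : ℝ) - (rmod u i j k : ℝ)) / (latLen u i j : ℝ))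
          = lam j := by
        rw [hc]; field_simp
      have e2 : c j * lam j * ((rmod u i j k : ℝ) / (latLen u i j : ℝ))
          = (c j - 1) * lam j := by
        rw [hc]; field_simp; ring
      simp only [hw, if_neg hji, dilVert, if_neg hji, smul_add, smul_smul]
      rw [e1, e2]
    rw [Finset.sum_congr rfl hterm, Finset.sum_add_distrib, ← Finset.sum_smul]
    have hdvi : dilVert u i k i = toR (u i) := by simp [dilVert]
    rw [hdvi]
    have hwi : w i = 1 - ∑ j' ∈ Finset.univ.erase i, c j' * lam j' := by
      simp [hw]
    have hlami : lam i = 1 - ∑ j ∈ Finset.univ.erase i, lam j := by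
      have := herase lam
      rw [this] at h1
      linarith
    have hcoef : w i + ∑ j ∈ Finset.univ.erase i, (c j - 1) * lam j = lam i := by
      rw [hwi, hlami]
      rw [Finset.sum_congr rfl (fun j _ => by ring :
        ∀ j ∈ Finset.univ.erase i, (c j - 1) * lam j = c j * lam j - lam j),
        Finset.sum_sub_distrib]
      ring
    rw [← hcoef, add_smul]
    abel
  rw [← key]
  unfold dil
  rw [mem_hull_iff]
  exact ⟨w, hw0, hw1, rfl⟩

/-- Each `dil u i k` is contained in the simplex (when `r < l` on each edge). -/
lemma dil_subset {n m : ℕ} (u : Fin m → Fin n → ℤ) (i : Fin m) (k : ℕ)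
    (hLr : ∀ j, j ≠ i → rmod u i j k < latLen u i j) :
    dil u i k ⊆ lsimplex u := by
  unfold dil lsimplex
  apply convexHull_min ?_ (convex_convexHull ℝ _)
  rintro x ⟨j, rfl⟩
  by_cases hj : j = i
  · rw [hj]
    simp only [dilVert, if_pos rfl]
    exact subset_convexHull ℝ _ ⟨i, rfl⟩
  · simp only [dilVert, if_neg hj]
    have hden := den_pos u i j k (hLr j hj)
    have hLpos : (0:ℝ) < (latLen u i j : ℝ) := by
      have : (0:ℝ) ≤ (rmod u i j k : ℝ) := Nat.cast_nonneg _
      linarith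
    have hUj : toR (u j) ∈ convexHull ℝ (Set.range fun i => toR (u i)) :=
      subset_convexHull ℝ _ (Set.mem_range_self j)
    have hUi : toR (u i) ∈ convexHull ℝ (Set.range fun i' => toR (u i')) :=
      subset_convexHull ℝ _ (Set.mem_range_self i)
    exact (convex_convexHull ℝ _) hUj hUi (by positivity) (by positivity) (by field_simp; ring)

/-! ### Translated dilations -/

lemma shift_sum {n : ℕ} (u : Fin 5 → Fin n → ℤ) (j0 : Fin 5) (hj0 : j0 ≠ 0) :
    ∑ j ∈ Finset.univ.erase 0, (((if j = j0 then 1 else 0 : ℕ)) : ℝ) • primVec u 0 j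
      = primVec u 0 j0 := by
  rw [Finset.sum_eq_single j0]
  · simp
  · intro b _ hb
    simp [hb]
  · intro h
    exact absurd (Finset.mem_erase.mpr ⟨hj0, Finset.mem_univ j0⟩) h

lemma mem_dilT {n : ℕ} (u : Fin 5 → Fin n → ℤ) (k : ℕ) (j0 : Fin 5) (hj0 : j0 ≠ 0)
    (hLr : ∀ j, j ≠ (0 : Fin 5) → rmod u 0 j k < latLen u 0 j)
    (lam lam' : Fin 5 → ℝ)
    (hrel : ∀ j, lam' j = if j = j0 then lam j - (latLen u 0 j0 : ℝ)⁻¹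
      else if j = 0 then lam j + (latLen u 0 j0 : ℝ)⁻¹ else lam j)
    (h0 : ∀ j, 0 ≤ lam' j) (h1' : ∑ j, lam' j = 1)
    (hcov : ∑ j ∈ Finset.univ.erase 0,
        (latLen u 0 j : ℝ) / ((latLen u 0 j : ℝ) - (rmod u 0 j k : ℝ)) * lam' j ≤ 1) :
    (∑ j, lam j • toR (u j)) ∈ dilT u 0 k (fun j => if j = j0 then 1 else 0) := by
  have hy : (∑ j, lam' j • toR (u j)) ∈ dil u 0 k := mem_dil u 0 k hLr lam' h0 h1' hcov
  refine ⟨∑ j, lam' j • toR (u j), hy, ?_⟩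
  rw [shift_sum u j0 hj0]
  unfold primVec
  set L : ℝ := (latLen u 0 j0 : ℝ)
  have hsplit : ∑ j, lam' j • toR (u j)
      = (∑ j, lam j • toR (u j)) + (-(L⁻¹ • toR (u j0)) + L⁻¹ • toR (u 0)) := by
    have hterm : ∀ j : Fin 5, lam' j • toR (u j)
        = lam j • toR (u j) +
          ((if j = j0 then -(L⁻¹ • toR (u j0)) else 0) +
           (if j = 0 then L⁻¹ • toR (u 0) else 0)) := by
      intro j
      by_cases h1 : j = j0
      · subst h1
        rw [hrel j, if_pos rfl, if_pos rfl, if_neg hj0, sub_smul]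
        module
      · by_cases h2 : j = 0
        · subst h2
          rw [hrel 0, if_neg h1, if_pos rfl, if_pos rfl, if_neg h1, add_smul]
          simp
        · rw [hrel j, if_neg h1, if_neg h2, if_neg h1, if_neg h2]
          simp
    rw [Finset.sum_congr rfl (fun j _ => hterm j), Finset.sum_add_distrib,
      Finset.sum_add_distrib, Finset.sum_ite_eq' Finset.univ j0,
      Finset.sum_ite_eq' Finset.univ 0]
    simp
  rw [hsplit, smul_sub]
  module

lemma dilT_subset {n : ℕ} (u : Fin 5 → Fin n → ℤ) (k : ℕ) (j0 : Fin 5) (hj0 : j0 ≠ 0)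
    (hLr : ∀ j, j ≠ (0 : Fin 5) → rmod u 0 j k < latLen u 0 j)
    (hge : ∀ j, j ≠ (0 : Fin 5) →
      (latLen u 0 j0 : ℝ)⁻¹ ≤ (rmod u 0 j k : ℝ) / (latLen u 0 j : ℝ)) :
    dilT u 0 k (fun j => if j = j0 then 1 else 0) ⊆ lsimplex u := by
  rintro x ⟨y, hy, rfl⟩
  rw [shift_sum u j0 hj0]
  set L : ℝ := (latLen u 0 j0 : ℝ) with hLdef
  have hL1 : (1:ℝ) ≤ L := by
    have h := hLr j0 hj0
    have h1 : 1 ≤ latLen u 0 j0 := by omega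
    rw [hLdef]
    exact_mod_cast h1
  have hLpos : (0:ℝ) < L := by linarith
  have hmem : ∀ p : Fin 5,
      dilVert u 0 k p + primVec u 0 j0 ∈ convexHull ℝ (Set.range fun i => toR (u i)) := by
    intro p
    have hUmem : ∀ q : Fin 5, toR (u q) ∈ convexHull ℝ (Set.range fun i => toR (u i)) :=
      fun q => subset_convexHull ℝ _ (Set.mem_range_self q)
    by_cases hp : p = 0
    · subst hp
      have : dilVert u 0 k 0 + primVec u 0 j0
          = (1 - L⁻¹) • toR (u 0) + L⁻¹ • toR (u j0) := by
        simp only [dilVert, if_pos rfl, primVec, ← hLdef, smul_sub, sub_smul, one_smul]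
        abel_nf
        exact (add_comm _ _).trans (add_assoc _ _ _)
      rw [this]
      exact (convex_convexHull ℝ _) (hUmem 0) (hUmem j0)
        (by have : (0:ℝ) < L⁻¹ := by positivity
            have : L⁻¹ ≤ 1 := by rw [inv_le_one_iff₀]; right; exact hL1
            linarith)
        (by positivity) (by ring)
    · have hdenp := den_pos u 0 p k (hLr p hp)
      have hLppos : (0:ℝ) < (latLen u 0 p : ℝ) := by
        have : (0:ℝ) ≤ (rmod u 0 p k : ℝ) := Nat.cast_nonneg _
        linarith
      set a : ℝ := ((latLen u 0 p : ℝ) - (rmod u 0 p k : ℝ)) / (latLen u 0 p : ℝ) with ha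
      set b : ℝ := (rmod u 0 p k : ℝ) / (latLen u 0 p : ℝ) - L⁻¹ with hb
      have hkey : dilVert u 0 k p + primVec u 0 j0
          = a • toR (u p) + b • toR (u 0) + L⁻¹ • toR (u j0) := by
        simp only [dilVert, if_neg hp, primVec, ← hLdef, ha, hb, smul_sub, sub_smul]
        abel
      rw [hkey]
      have hsum3 : a + b + L⁻¹ = 1 := by
        rw [ha, hb]
        field_simp
        ring
      have hb0 : 0 ≤ b := by
        rw [hb]
        have := hge p hp
        linarith
      have ha0 : 0 ≤ a := by positivity
      have := (convex_convexHull ℝ (Set.range fun i => toR (u i))).sum_mem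
        (t := (Finset.univ : Finset (Fin 3)))
        (w := ![a, b, L⁻¹]) (z := ![toR (u p), toR (u 0), toR (u j0)])
        (fun i _ => by fin_cases i <;> simp [ha0, hb0, le_of_lt (inv_pos.mpr hLpos)])
        (by rw [Fin.sum_univ_three]; simpa using hsum3)
        (fun i _ => by fin_cases i <;> simp only [Matrix.cons_val_zero, Matrix.cons_val_one,
          Matrix.head_cons, Matrix.cons_val_two, Matrix.tail_cons] <;>
          first | exact hUmem p | exact hUmem 0 | exact hUmem j0)
      rw [Fin.sum_univ_three] at this
      simpa using this
  -- now y + v is a convex combination of the shifted vertices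
  obtain ⟨w, hw0, hw1, rfl⟩ := (mem_hull_iff (dilVert u 0 k) y).mp hy
  show (∑ j, w j • dilVert u 0 k j) + primVec u 0 j0
      ∈ convexHull ℝ (Set.range fun i => toR (u i))
  have heq : (∑ j, w j • dilVert u 0 k j) + primVec u 0 j0
      = ∑ j, w j • (dilVert u 0 k j + primVec u 0 j0) := by
    rw [Finset.sum_congr rfl (fun (j : Fin 5) _ =>
        smul_add (w j) (dilVert u 0 k j) (primVec u 0 j0)),
      Finset.sum_add_distrib, ← Finset.sum_smul, hw1, one_smul]
  rw [heq]
  exact (convex_convexHull ℝ _).sum_mem (fun j _ => hw0 j) hw1 (fun j _ => hmem j)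

/-- Clean sufficiency criterion for membership in the translated dilation. -/
lemma mem_dilT' {n : ℕ} (u : Fin 5 → Fin n → ℤ) (k : ℕ) (j0 : Fin 5) (hj0 : j0 ≠ 0)
    (hLr : ∀ j, j ≠ (0 : Fin 5) → rmod u 0 j k < latLen u 0 j)
    (lam : Fin 5 → ℝ) (h0 : ∀ j, 0 ≤ lam j) (h1 : ∑ j, lam j = 1)
    (hj0' : (latLen u 0 j0 : ℝ)⁻¹ ≤ lam j0)
    (hcov : ∑ j ∈ Finset.univ.erase 0,
        (latLen u 0 j : ℝ) / ((latLen u 0 j : ℝ) - (rmod u 0 j k : ℝ)) * lam j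
      ≤ 1 + (latLen u 0 j0 : ℝ) / ((latLen u 0 j0 : ℝ) - (rmod u 0 j0 k : ℝ))
          * (latLen u 0 j0 : ℝ)⁻¹) :
    (∑ j, lam j • toR (u j)) ∈ dilT u 0 k (fun j => if j = j0 then 1 else 0) := by
  classical
  set lam' : Fin 5 → ℝ := fun j =>
    if j = j0 then lam j - (latLen u 0 j0 : ℝ)⁻¹
    else if j = 0 then lam j + (latLen u 0 j0 : ℝ)⁻¹ else lam j with hlam'
  have hLinv0 : (0:ℝ) ≤ (latLen u 0 j0 : ℝ)⁻¹ := inv_nonneg.mpr (Nat.cast_nonneg _)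
  have hval1 : lam' j0 = lam j0 - (latLen u 0 j0 : ℝ)⁻¹ := by
    simp only [hlam']
    simp
  have hval2 : lam' 0 = lam 0 + (latLen u 0 j0 : ℝ)⁻¹ := by
    simp only [hlam']
    rw [if_neg (Ne.symm hj0)]
    simp
  have hval3 : ∀ j, j ≠ j0 → j ≠ 0 → lam' j = lam j := by
    intro j ha hb
    simp only [hlam']
    rw [if_neg ha, if_neg hb]
  have hdec : ∀ j : Fin 5, lam' j
      = lam j + ((if j = j0 then -(latLen u 0 j0 : ℝ)⁻¹ else 0)
        + (if j = 0 then (latLen u 0 j0 : ℝ)⁻¹ else 0)) := by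
    intro j
    by_cases hjj : j = j0
    · subst hjj
      rw [hval1, if_pos rfl, if_neg hj0]
      ring
    · by_cases hj00 : j = 0
      · subst hj00
        rw [hval2, if_neg hjj, if_pos rfl]
        ring
      · rw [hval3 j hjj hj00, if_neg hjj, if_neg hj00]
        ring
  have h0' : ∀ j, 0 ≤ lam' j := by
    intro j
    by_cases hjj : j = j0
    · subst hjj
      rw [hval1]
      linarith [hj0']
    · by_cases hj00 : j = 0
      · subst hj00
        rw [hval2]
        linarith [h0 0]
      · rw [hval3 j hjj hj00]
        exact h0 j
  have h1' : ∑ j, lam' j = 1 := by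
    rw [Finset.sum_congr rfl (fun j _ => hdec j), Finset.sum_add_distrib,
      Finset.sum_add_distrib, Finset.sum_ite_eq' Finset.univ j0,
      Finset.sum_ite_eq' Finset.univ 0, h1]
    simp
  have hcov' : ∑ j ∈ Finset.univ.erase 0,
      (latLen u 0 j : ℝ) / ((latLen u 0 j : ℝ) - (rmod u 0 j k : ℝ)) * lam' j ≤ 1 := by
    have hterm : ∀ j ∈ Finset.univ.erase 0,
        (latLen u 0 j : ℝ) / ((latLen u 0 j : ℝ) - (rmod u 0 j k : ℝ)) * lam' j
        = (latLen u 0 j : ℝ) / ((latLen u 0 j : ℝ) - (rmod u 0 j k : ℝ)) * lam j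
          + (if j = j0 then
              -((latLen u 0 j : ℝ) / ((latLen u 0 j : ℝ) - (rmod u 0 j k : ℝ))
                * (latLen u 0 j0 : ℝ)⁻¹)
             else 0) := by
      intro j hj
      have hjne : j ≠ 0 := Finset.ne_of_mem_erase hj
      by_cases hjj : j = j0
      · subst hjj
        rw [hval1, if_pos rfl]
        ring
      · rw [hval3 j hjj hjne, if_neg hjj]
        ring
    rw [Finset.sum_congr rfl hterm, Finset.sum_add_distrib,
      Finset.sum_ite_eq' (Finset.univ.erase 0) j0]
    rw [if_pos (Finset.mem_erase.mpr ⟨hj0, Finset.mem_univ j0⟩)]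
    linarith [hcov]
  exact mem_dilT u k j0 hj0 hLr lam lam' (fun j => rfl) h0' h1' hcov'

/-! ### Helpers for the main proof -/

lemma erase_sum0 (f : Fin 5 → ℝ) :
    ∑ j ∈ Finset.univ.erase 0, f j = f 1 + f 2 + f 3 + f 4 := by
  rw [show (Finset.univ.erase (0 : Fin 5)) = {1, 2, 3, 4} from by decide]
  simp [Finset.sum_insert, Finset.mem_insert]
  ring

lemma erase_sum1 (f : Fin 5 → ℝ) :
    ∑ j ∈ Finset.univ.erase 1, f j = f 0 + f 2 + f 3 + f 4 := by
  rw [show (Finset.univ.erase (1 : Fin 5)) = {0, 2, 3, 4} from by decide]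
  simp [Finset.sum_insert, Finset.mem_insert]
  ring

lemma erase_sum2 (f : Fin 5 → ℝ) :
    ∑ j ∈ Finset.univ.erase 2, f j = f 0 + f 1 + f 3 + f 4 := by
  rw [show (Finset.univ.erase (2 : Fin 5)) = {0, 1, 3, 4} from by decide]
  simp [Finset.sum_insert, Finset.mem_insert]
  ring

lemma erase_sum3 (f : Fin 5 → ℝ) :
    ∑ j ∈ Finset.univ.erase 3, f j = f 0 + f 1 + f 2 + f 4 := by
  rw [show (Finset.univ.erase (3 : Fin 5)) = {0, 1, 2, 4} from by decide]
  simp [Finset.sum_insert, Finset.mem_insert]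
  ring

lemma erase_sum4 (f : Fin 5 → ℝ) :
    ∑ j ∈ Finset.univ.erase 4, f j = f 0 + f 1 + f 2 + f 3 := by
  rw [show (Finset.univ.erase (4 : Fin 5)) = {0, 1, 2, 3} from by decide]
  simp [Finset.sum_insert, Finset.mem_insert]
  ring

/-- Membership in a dilation given upper bounds on the coefficients. -/
lemma mem_dil_of_bounds {n : ℕ} (u : Fin 5 → Fin n → ℤ) (i : Fin 5) (k : ℕ)
    (hLr : ∀ j, j ≠ i → rmod u i j k < latLen u i j)
    (lam : Fin 5 → ℝ) (h0 : ∀ j, 0 ≤ lam j) (h1 : ∑ j, lam j = 1)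
    (b : Fin 5 → ℝ)
    (hb : ∀ j, j ≠ i →
      (latLen u i j : ℝ) / ((latLen u i j : ℝ) - (rmod u i j k : ℝ)) ≤ b j)
    (hsum : ∑ j ∈ Finset.univ.erase i, b j * lam j ≤ 1) :
    (∑ j, lam j • toR (u j)) ∈ dil u i k := by
  refine mem_dil u i k hLr lam h0 h1 (le_trans (Finset.sum_le_sum ?_) hsum)
  intro j hj
  exact mul_le_mul_of_nonneg_right (hb j (Finset.ne_of_mem_erase hj)) (h0 j)

lemma cexpr_symm {n m : ℕ} (u : Fin m → Fin n → ℤ) (i j : Fin m) (k : ℕ) :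
    (latLen u i j : ℝ) / ((latLen u i j : ℝ) - (rmod u i j k : ℝ))
      = (latLen u j i : ℝ) / ((latLen u j i : ℝ) - (rmod u j i k : ℝ)) := by
  unfold rmod
  rw [latLen_symm u i j]

/-! ### Arithmetic covering lemmas -/

lemma arith7 (a0 a1 a2 a3 a4 : ℝ) (h0 : 0 ≤ a0) (h1 : 0 ≤ a1) (h2 : 0 ≤ a2)
    (h3 : 0 ≤ a3) (h4 : 0 ≤ a4) (hs : a0 + a1 + a2 + a3 + a4 = 1) :
    (4/3*a1 + 4/3*a2 + 11/9*a3 + 7/6*a4 ≤ 1) ∨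
    (a1 + a2 + 11/8*a3 + 7/4*a4 ≤ 1) ∨
    (4/3*a0 + 4/3*a2 + 11/9*a3 + 11/9*a4 ≤ 1) ∨
    (4/3*a0 + 4/3*a1 + 11/9*a3 + 11/9*a4 ≤ 1) ∨
    (11/9*a0 + 11/9*a1 + 11/9*a2 + 4/3*a4 ≤ 1) ∨
    (7/6*a0 + 11/9*a1 + 11/9*a2 + 4/3*a3 ≤ 1) ∨
    ((1/7 ≤ a4) ∧ 4/3*a1 + 4/3*a2 + 11/9*a3 + 7/6*a4 ≤ 1+1/6) ∨
    ((1/11 ≤ a3) ∧ 4/3*a1 + 4/3*a2 + 11/9*a3 + 7/6*a4 ≤ 1 + 1/9) := by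
  rcases le_or_gt (4/3*a1 + 4/3*a2 + 11/9*a3 + 7/6*a4) 1 with hB | hB
  · exact Or.inl hB
  rcases le_or_gt (a1 + a2 + 11/8*a3 + 7/4*a4) 1 with hC | hC
  · exact Or.inr (Or.inl hC)
  rcases le_or_gt (4/3*a0 + 4/3*a2 + 11/9*a3 + 11/9*a4) 1 with hA1 | hA1
  · exact Or.inr (Or.inr (Or.inl hA1))
  rcases le_or_gt (4/3*a0 + 4/3*a1 + 11/9*a3 + 11/9*a4) 1 with hA2 | hA2
  · exact Or.inr (Or.inr (Or.inr (Or.inl hA2)))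
  rcases le_or_gt (11/9*a0 + 11/9*a1 + 11/9*a2 + 4/3*a4) 1 with hA3 | hA3
  · exact Or.inr (Or.inr (Or.inr (Or.inr (Or.inl hA3))))
  rcases le_or_gt (7/6*a0 + 11/9*a1 + 11/9*a2 + 4/3*a3) 1 with hA4 | hA4
  · exact Or.inr (Or.inr (Or.inr (Or.inr (Or.inr (Or.inl hA4)))))
  rcases le_or_gt (1/11) a3 with hE3 | hE3
  · rcases le_or_gt (4/3*a1 + 4/3*a2 + 11/9*a3 + 7/6*a4) (1 + 1/9) with hES | hES
    · exact Or.inr (Or.inr (Or.inr (Or.inr (Or.inr (Or.inr (Or.inr ⟨hE3, hES⟩))))))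
    · refine Or.inr (Or.inr (Or.inr (Or.inr (Or.inr (Or.inr (Or.inl ⟨?_, ?_⟩)))))) <;> linarith
  · refine Or.inr (Or.inr (Or.inr (Or.inr (Or.inr (Or.inr (Or.inl ⟨?_, ?_⟩)))))) <;> linarith

lemma arith11 (a0 a1 a2 a3 a4 : ℝ) (h0 : 0 ≤ a0) (h1 : 0 ≤ a1) (h2 : 0 ≤ a2)
    (h3 : 0 ≤ a3) (h4 : 0 ≤ a4) (hs : a0 + a1 + a2 + a3 + a4 = 1) :
    (4/3*a1 + 4/3*a2 + 11/9*a3 + 11/9*a4 ≤ 1) ∨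
    (a1 + a2 + 11/8*a3 + 11/8*a4 ≤ 1) ∨
    (4/3*a0 + 4/3*a2 + 11/9*a3 + 11/9*a4 ≤ 1) ∨
    (4/3*a0 + 4/3*a1 + 11/9*a3 + 11/9*a4 ≤ 1) ∨
    (11/9*a0 + 11/9*a1 + 11/9*a2 + 4/3*a4 ≤ 1) ∨
    (11/9*a0 + 11/9*a1 + 11/9*a2 + 4/3*a3 ≤ 1) ∨
    ((1/11 ≤ a4) ∧ 4/3*a1 + 4/3*a2 + 11/9*a3 + 11/9*a4 ≤ 1+1/9) ∨
    ((1/11 ≤ a3) ∧ 4/3*a1 + 4/3*a2 + 11/9*a3 + 11/9*a4 ≤ 1 + 1/9) := by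
  rcases le_or_gt (4/3*a1 + 4/3*a2 + 11/9*a3 + 11/9*a4) 1 with hB | hB
  · exact Or.inl hB
  rcases le_or_gt (a1 + a2 + 11/8*a3 + 11/8*a4) 1 with hC | hC
  · exact Or.inr (Or.inl hC)
  rcases le_or_gt (4/3*a0 + 4/3*a2 + 11/9*a3 + 11/9*a4) 1 with hA1 | hA1
  · exact Or.inr (Or.inr (Or.inl hA1))
  rcases le_or_gt (4/3*a0 + 4/3*a1 + 11/9*a3 + 11/9*a4) 1 with hA2 | hA2
  · exact Or.inr (Or.inr (Or.inr (Or.inl hA2)))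
  rcases le_or_gt (11/9*a0 + 11/9*a1 + 11/9*a2 + 4/3*a4) 1 with hA3 | hA3
  · exact Or.inr (Or.inr (Or.inr (Or.inr (Or.inl hA3))))
  rcases le_or_gt (11/9*a0 + 11/9*a1 + 11/9*a2 + 4/3*a3) 1 with hA4 | hA4
  · exact Or.inr (Or.inr (Or.inr (Or.inr (Or.inr (Or.inl hA4)))))
  rcases le_or_gt (1/11) a3 with hE3 | hE3
  · rcases le_or_gt (4/3*a1 + 4/3*a2 + 11/9*a3 + 11/9*a4) (1 + 1/9) with hES | hES
    · exact Or.inr (Or.inr (Or.inr (Or.inr (Or.inr (Or.inr (Or.inr ⟨hE3, hES⟩))))))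
    · refine Or.inr (Or.inr (Or.inr (Or.inr (Or.inr (Or.inr (Or.inl ⟨?_, ?_⟩)))))) <;> linarith
  · refine Or.inr (Or.inr (Or.inr (Or.inr (Or.inr (Or.inr (Or.inl ⟨?_, ?_⟩)))))) <;> linarith

lemma arith14 (a0 a1 a2 a3 a4 : ℝ) (h0 : 0 ≤ a0) (h1 : 0 ≤ a1) (h2 : 0 ≤ a2)
    (h3 : 0 ≤ a3) (h4 : 0 ≤ a4) (hs : a0 + a1 + a2 + a3 + a4 = 1) :
    (4/3*a1 + 4/3*a2 + 11/9*a3 + 7/6*a4 ≤ 1) ∨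
    (a1 + a2 + 11/8*a3 + 7/6*a4 ≤ 1) ∨
    (4/3*a0 + 4/3*a2 + 11/9*a3 + 4/3*a4 ≤ 1) ∨
    (4/3*a0 + 4/3*a1 + 11/9*a3 + 4/3*a4 ≤ 1) ∨
    (11/9*a0 + 11/9*a1 + 11/9*a2 + 11/9*a4 ≤ 1) ∨
    (7/6*a0 + 4/3*a1 + 4/3*a2 + 11/9*a3 ≤ 1) ∨
    ((1/14 ≤ a4) ∧ 4/3*a1 + 4/3*a2 + 11/9*a3 + 7/6*a4 ≤ 1+1/12) ∨
    ((1/11 ≤ a3) ∧ 4/3*a1 + 4/3*a2 + 11/9*a3 + 7/6*a4 ≤ 1 + 1/9) := by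
  rcases le_or_gt (4/3*a1 + 4/3*a2 + 11/9*a3 + 7/6*a4) 1 with hB | hB
  · exact Or.inl hB
  rcases le_or_gt (a1 + a2 + 11/8*a3 + 7/6*a4) 1 with hC | hC
  · exact Or.inr (Or.inl hC)
  rcases le_or_gt (4/3*a0 + 4/3*a2 + 11/9*a3 + 4/3*a4) 1 with hA1 | hA1
  · exact Or.inr (Or.inr (Or.inl hA1))
  rcases le_or_gt (4/3*a0 + 4/3*a1 + 11/9*a3 + 4/3*a4) 1 with hA2 | hA2
  · exact Or.inr (Or.inr (Or.inr (Or.inl hA2)))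
  rcases le_or_gt (11/9*a0 + 11/9*a1 + 11/9*a2 + 11/9*a4) 1 with hA3 | hA3
  · exact Or.inr (Or.inr (Or.inr (Or.inr (Or.inl hA3))))
  rcases le_or_gt (7/6*a0 + 4/3*a1 + 4/3*a2 + 11/9*a3) 1 with hA4 | hA4
  · exact Or.inr (Or.inr (Or.inr (Or.inr (Or.inr (Or.inl hA4)))))
  rcases le_or_gt (1/11) a3 with hE3 | hE3
  · rcases le_or_gt (4/3*a1 + 4/3*a2 + 11/9*a3 + 7/6*a4) (1 + 1/9) with hES | hES
    · exact Or.inr (Or.inr (Or.inr (Or.inr (Or.inr (Or.inr (Or.inr ⟨hE3, hES⟩))))))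
    · refine Or.inr (Or.inr (Or.inr (Or.inr (Or.inr (Or.inr (Or.inl ⟨?_, ?_⟩)))))) <;> linarith
  · refine Or.inr (Or.inr (Or.inr (Or.inr (Or.inr (Or.inr (Or.inl ⟨?_, ?_⟩)))))) <;> linarith

lemma arith17 (a0 a1 a2 a3 a4 : ℝ) (h0 : 0 ≤ a0) (h1 : 0 ≤ a1) (h2 : 0 ≤ a2)
    (h3 : 0 ≤ a3) (h4 : 0 ≤ a4) (hs : a0 + a1 + a2 + a3 + a4 = 1) :
    (4/3*a1 + 4/3*a2 + 11/9*a3 + 17/15*a4 ≤ 1) ∨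
    (a1 + a2 + 11/8*a3 + 17/16*a4 ≤ 1) ∨
    (4/3*a0 + 4/3*a2 + 11/9*a3 + 11/9*a4 ≤ 1) ∨
    (4/3*a0 + 4/3*a1 + 11/9*a3 + 11/9*a4 ≤ 1) ∨
    (11/9*a0 + 11/9*a1 + 11/9*a2 + 4/3*a4 ≤ 1) ∨
    (17/15*a0 + 11/9*a1 + 11/9*a2 + 4/3*a3 ≤ 1) ∨
    ((1/17 ≤ a4) ∧ 4/3*a1 + 4/3*a2 + 11/9*a3 + 17/15*a4 ≤ 1+1/15) ∨
    ((1/11 ≤ a3) ∧ 4/3*a1 + 4/3*a2 + 11/9*a3 + 17/15*a4 ≤ 1 + 1/9) := by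
  rcases le_or_gt (4/3*a1 + 4/3*a2 + 11/9*a3 + 17/15*a4) 1 with hB | hB
  · exact Or.inl hB
  rcases le_or_gt (a1 + a2 + 11/8*a3 + 17/16*a4) 1 with hC | hC
  · exact Or.inr (Or.inl hC)
  rcases le_or_gt (4/3*a0 + 4/3*a2 + 11/9*a3 + 11/9*a4) 1 with hA1 | hA1
  · exact Or.inr (Or.inr (Or.inl hA1))
  rcases le_or_gt (4/3*a0 + 4/3*a1 + 11/9*a3 + 11/9*a4) 1 with hA2 | hA2
  · exact Or.inr (Or.inr (Or.inr (Or.inl hA2)))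
  rcases le_or_gt (11/9*a0 + 11/9*a1 + 11/9*a2 + 4/3*a4) 1 with hA3 | hA3
  · exact Or.inr (Or.inr (Or.inr (Or.inr (Or.inl hA3))))
  rcases le_or_gt (17/15*a0 + 11/9*a1 + 11/9*a2 + 4/3*a3) 1 with hA4 | hA4
  · exact Or.inr (Or.inr (Or.inr (Or.inr (Or.inr (Or.inl hA4)))))
  rcases le_or_gt (1/11) a3 with hE3 | hE3
  · rcases le_or_gt (4/3*a1 + 4/3*a2 + 11/9*a3 + 17/15*a4) (1 + 1/9) with hES | hES
    · exact Or.inr (Or.inr (Or.inr (Or.inr (Or.inr (Or.inr (Or.inr ⟨hE3, hES⟩))))))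
    · refine Or.inr (Or.inr (Or.inr (Or.inr (Or.inr (Or.inr (Or.inl ⟨?_, ?_⟩)))))) <;> linarith
  · refine Or.inr (Or.inr (Or.inr (Or.inr (Or.inr (Or.inr (Or.inl ⟨?_, ?_⟩)))))) <;> linarith

set_option maxHeartbeats 4000000

/-- Case C: in dimension 4, with `l(P) ≥ 3`, no edge of length 5,
`l_{01}, l_{02} ∈ {4,8}`, `l_{03} = 11`, `l_{04} ∈ {7,11,14,17}`, and
`t = (0,0,0,1)`, `t′ = (0,0,1,0)`, one has
`P = (⋃_{i=0}^4 P_{i,3}) ∪ P_{0,4} ∪ P_{0,3,t} ∪ P_{0,3,t′}`. -/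
theorem dim4_caseC
    (u : Fin 5 → Fin 4 → ℤ)
    (hind : AffineIndependent ℝ fun i => toR (u i))
    (hlen : ∀ i j, i ≠ j → 3 ≤ latLen u i j)
    (h5 : ∀ i j, i ≠ j → latLen u i j ≠ 5)
    (h01 : latLen u 0 1 = 4 ∨ latLen u 0 1 = 8)
    (h02 : latLen u 0 2 = 4 ∨ latLen u 0 2 = 8)
    (h03 : latLen u 0 3 = 11)
    (h04 : latLen u 0 4 = 7 ∨ latLen u 0 4 = 11 ∨ latLen u 0 4 = 14 ∨ latLen u 0 4 = 17)
    (t t' : Fin 5 → ℕ)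
    (ht : t = fun j => if j = 4 then 1 else 0)
    (ht' : t' = fun j => if j = 3 then 1 else 0) :
    lsimplex u = (⋃ i, dil u i 3) ∪ dil u 0 4 ∪ dilT u 0 3 t ∪ dilT u 0 3 t' := by
  subst ht ht'
  have hLr3 : ∀ (i : Fin 5) (j : Fin 5), j ≠ i → rmod u i j 3 < latLen u i j :=
    fun i j hj => rmod_lt3 u i j (hlen i j (Ne.symm hj))
  have hL01 : 4 ≤ latLen u 0 1 := by rcases h01 with h | h <;> omega
  have hL02 : 4 ≤ latLen u 0 2 := by rcases h02 with h | h <;> omega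
  have hL03 : 4 ≤ latLen u 0 3 := by omega
  have hL04 : 4 ≤ latLen u 0 4 := by rcases h04 with h | h | h | h <;> omega
  have hLr4 : ∀ j, j ≠ (0 : Fin 5) → rmod u 0 j 4 < latLen u 0 j := by
    intro j hj
    have h4 : 4 ≤ latLen u 0 j := by
      fin_cases j
      · simp at hj
      · exact hL01
      · exact hL02
      · exact hL03
      · exact hL04
    show latLen u 0 j % 4 < latLen u 0 j
    omega
  have e01 : 2 ∣ latLen u 0 1 := by rcases h01 with h | h <;> omega
  have e02 : 2 ∣ latLen u 0 2 := by rcases h02 with h | h <;> omega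
  have o03 : ¬ 2 ∣ latLen u 0 3 := by omega
  have o13 : ¬ 2 ∣ latLen u 1 3 := parity3 u 0 1 3 e01 o03
  have o23 : ¬ 2 ∣ latLen u 2 3 := parity3 u 0 2 3 e02 o03
  have o31 : ¬ 2 ∣ latLen u 3 1 := by rw [latLen_symm]; exact o13
  have o32 : ¬ 2 ∣ latLen u 3 2 := by rw [latLen_symm]; exact o23
  have b43 : ∀ i j : Fin 5, i ≠ j →
      (latLen u i j : ℝ) / ((latLen u i j : ℝ) - (rmod u i j 3 : ℝ)) ≤ 4/3 :=
    fun i j h => c43 _ (hlen i j h) (h5 i j h)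
  have b119 : ∀ i j : Fin 5, i ≠ j → ¬ 2 ∣ latLen u i j →
      (latLen u i j : ℝ) / ((latLen u i j : ℝ) - (rmod u i j 3 : ℝ)) ≤ 11/9 :=
    fun i j h ho => c119 _ (hlen i j h) (h5 i j h) ho
  have v01 : (latLen u 0 1 : ℝ) / ((latLen u 0 1 : ℝ) - (rmod u 0 1 3 : ℝ)) = 4/3 := by
    show (latLen u 0 1 : ℝ) / ((latLen u 0 1 : ℝ) - ((latLen u 0 1 % 3 : ℕ) : ℝ)) = 4/3
    rcases h01 with h | h <;> rw [h] <;> norm_num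
  have v02 : (latLen u 0 2 : ℝ) / ((latLen u 0 2 : ℝ) - (rmod u 0 2 3 : ℝ)) = 4/3 := by
    show (latLen u 0 2 : ℝ) / ((latLen u 0 2 : ℝ) - ((latLen u 0 2 % 3 : ℕ) : ℝ)) = 4/3
    rcases h02 with h | h <;> rw [h] <;> norm_num
  have v03 : (latLen u 0 3 : ℝ) / ((latLen u 0 3 : ℝ) - (rmod u 0 3 3 : ℝ)) = 11/9 := by
    show (latLen u 0 3 : ℝ) / ((latLen u 0 3 : ℝ) - ((latLen u 0 3 % 3 : ℕ) : ℝ)) = 11/9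
    rw [h03]; norm_num
  have w01 : (latLen u 0 1 : ℝ) / ((latLen u 0 1 : ℝ) - (rmod u 0 1 4 : ℝ)) = 1 := by
    show (latLen u 0 1 : ℝ) / ((latLen u 0 1 : ℝ) - ((latLen u 0 1 % 4 : ℕ) : ℝ)) = 1
    rcases h01 with h | h <;> rw [h] <;> norm_num
  have w02 : (latLen u 0 2 : ℝ) / ((latLen u 0 2 : ℝ) - (rmod u 0 2 4 : ℝ)) = 1 := by
    show (latLen u 0 2 : ℝ) / ((latLen u 0 2 : ℝ) - ((latLen u 0 2 % 4 : ℕ) : ℝ)) = 1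
    rcases h02 with h | h <;> rw [h] <;> norm_num
  have w03 : (latLen u 0 3 : ℝ) / ((latLen u 0 3 : ℝ) - (rmod u 0 3 4 : ℝ)) = 11/8 := by
    show (latLen u 0 3 : ℝ) / ((latLen u 0 3 : ℝ) - ((latLen u 0 3 % 4 : ℕ) : ℝ)) = 11/8
    rw [h03]; norm_num
  have s10 : (latLen u 1 0 : ℝ) / ((latLen u 1 0 : ℝ) - (rmod u 1 0 3 : ℝ)) = 4/3 :=
    (cexpr_symm u 1 0 3).trans v01
  have s20 : (latLen u 2 0 : ℝ) / ((latLen u 2 0 : ℝ) - (rmod u 2 0 3 : ℝ)) = 4/3 :=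
    (cexpr_symm u 2 0 3).trans v02
  have s30 : (latLen u 3 0 : ℝ) / ((latLen u 3 0 : ℝ) - (rmod u 3 0 3 : ℝ)) = 11/9 :=
    (cexpr_symm u 3 0 3).trans v03
  have hinv3 : ((latLen u 0 3 : ℝ))⁻¹ = 1/11 := by rw [h03]; norm_num
  ext x
  constructor
  · intro hx
    have hx' : x ∈ convexHull ℝ (Set.range fun i => toR (u i)) := hx
    obtain ⟨lam, hl0, hl1, hxe⟩ := (mem_hull_iff (fun i => toR (u i)) x).mp hx'
    have hsum5 : lam 0 + lam 1 + lam 2 + lam 3 + lam 4 = 1 := by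
      rw [← Fin.sum_univ_five]; exact hl1
    subst hxe
    rcases h04 with h04 | h04 | h04 | h04
    · -- case latLen u 0 4 = 7
      have o04 : ¬ 2 ∣ latLen u 0 4 := by omega
      have o14 : ¬ 2 ∣ latLen u 1 4 := parity3 u 0 1 4 e01 o04
      have o24 : ¬ 2 ∣ latLen u 2 4 := parity3 u 0 2 4 e02 o04
      have o41 : ¬ 2 ∣ latLen u 4 1 := by rw [latLen_symm]; exact o14
      have o42 : ¬ 2 ∣ latLen u 4 2 := by rw [latLen_symm]; exact o24
      have v04 : (latLen u 0 4 : ℝ) / ((latLen u 0 4 : ℝ) - (rmod u 0 4 3 : ℝ)) = 7/6 := by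
        show (latLen u 0 4 : ℝ) / ((latLen u 0 4 : ℝ) - ((latLen u 0 4 % 3 : ℕ) : ℝ)) = 7/6
        rw [h04]; norm_num
      have w04 : (latLen u 0 4 : ℝ) / ((latLen u 0 4 : ℝ) - (rmod u 0 4 4 : ℝ)) = 7/4 := by
        show (latLen u 0 4 : ℝ) / ((latLen u 0 4 : ℝ) - ((latLen u 0 4 % 4 : ℕ) : ℝ)) = 7/4
        rw [h04]; norm_num
      have s40 : (latLen u 4 0 : ℝ) / ((latLen u 4 0 : ℝ) - (rmod u 4 0 3 : ℝ)) = 7/6 :=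
        (cexpr_symm u 4 0 3).trans v04
      have hinv4 : ((latLen u 0 4 : ℝ))⁻¹ = 1/7 := by rw [h04]; norm_num
      rcases arith7 (lam 0) (lam 1) (lam 2) (lam 3) (lam 4)
        (hl0 0) (hl0 1) (hl0 2) (hl0 3) (hl0 4) hsum5 with hB | hC | hA1 | hA2 | hA3 | hA4 | hD | hE
      · refine Or.inl (Or.inl (Or.inl (Set.mem_iUnion.mpr ⟨0, mem_dil u 0 3 (hLr3 0) lam hl0 hl1 ?_⟩)))
        rw [erase_sum0, v01, v02, v03, v04]
        linarith
      · refine Or.inl (Or.inl (Or.inr (mem_dil u 0 4 hLr4 lam hl0 hl1 ?_)))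
        rw [erase_sum0, w01, w02, w03, w04]
        linarith
      · refine Or.inl (Or.inl (Or.inl (Set.mem_iUnion.mpr ⟨1, mem_dil u 1 3 (hLr3 1) lam hl0 hl1 ?_⟩)))
        rw [erase_sum1]
        have t0 := mul_le_mul_of_nonneg_right s10.le (hl0 0)
        have t2 := mul_le_mul_of_nonneg_right (b43 1 2 (by decide)) (hl0 2)
        have t3 := mul_le_mul_of_nonneg_right (b119 1 3 (by decide) o13) (hl0 3)
        have t4 := mul_le_mul_of_nonneg_right (b119 1 4 (by decide) o14) (hl0 4)
        linarith
      · refine Or.inl (Or.inl (Or.inl (Set.mem_iUnion.mpr ⟨2, mem_dil u 2 3 (hLr3 2) lam hl0 hl1 ?_⟩)))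
        rw [erase_sum2]
        have t0 := mul_le_mul_of_nonneg_right s20.le (hl0 0)
        have t1 := mul_le_mul_of_nonneg_right (b43 2 1 (by decide)) (hl0 1)
        have t3 := mul_le_mul_of_nonneg_right (b119 2 3 (by decide) o23) (hl0 3)
        have t4 := mul_le_mul_of_nonneg_right (b119 2 4 (by decide) o24) (hl0 4)
        linarith
      · refine Or.inl (Or.inl (Or.inl (Set.mem_iUnion.mpr ⟨3, mem_dil u 3 3 (hLr3 3) lam hl0 hl1 ?_⟩)))
        rw [erase_sum3]
        have t0 := mul_le_mul_of_nonneg_right s30.le (hl0 0)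
        have t1 := mul_le_mul_of_nonneg_right (b119 3 1 (by decide) o31) (hl0 1)
        have t2 := mul_le_mul_of_nonneg_right (b119 3 2 (by decide) o32) (hl0 2)
        have t4 := mul_le_mul_of_nonneg_right (b43 3 4 (by decide)) (hl0 4)
        linarith
      · refine Or.inl (Or.inl (Or.inl (Set.mem_iUnion.mpr ⟨4, mem_dil u 4 3 (hLr3 4) lam hl0 hl1 ?_⟩)))
        rw [erase_sum4]
        have t0 := mul_le_mul_of_nonneg_right s40.le (hl0 0)
        have t1 := mul_le_mul_of_nonneg_right (b119 4 1 (by decide) o41) (hl0 1)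
        have t2 := mul_le_mul_of_nonneg_right (b119 4 2 (by decide) o42) (hl0 2)
        have t3 := mul_le_mul_of_nonneg_right (b43 4 3 (by decide)) (hl0 3)
        linarith
      · obtain ⟨hD1, hD2⟩ := hD
        refine Or.inl (Or.inr (mem_dilT' u 3 4 (by decide) (hLr3 0) lam hl0 hl1 ?_ ?_))
        · rw [hinv4]; linarith
        · rw [erase_sum0, v01, v02, v03, v04, hinv4]; linarith
      · obtain ⟨hE1, hE2⟩ := hE
        refine Or.inr (mem_dilT' u 3 3 (by decide) (hLr3 0) lam hl0 hl1 ?_ ?_)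
        · rw [hinv3]; linarith
        · rw [erase_sum0, v01, v02, v03, v04, hinv3]; linarith
    · -- case latLen u 0 4 = 11
      have o04 : ¬ 2 ∣ latLen u 0 4 := by omega
      have o14 : ¬ 2 ∣ latLen u 1 4 := parity3 u 0 1 4 e01 o04
      have o24 : ¬ 2 ∣ latLen u 2 4 := parity3 u 0 2 4 e02 o04
      have o41 : ¬ 2 ∣ latLen u 4 1 := by rw [latLen_symm]; exact o14
      have o42 : ¬ 2 ∣ latLen u 4 2 := by rw [latLen_symm]; exact o24
      have v04 : (latLen u 0 4 : ℝ) / ((latLen u 0 4 : ℝ) - (rmod u 0 4 3 : ℝ)) = 11/9 := by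
        show (latLen u 0 4 : ℝ) / ((latLen u 0 4 : ℝ) - ((latLen u 0 4 % 3 : ℕ) : ℝ)) = 11/9
        rw [h04]; norm_num
      have w04 : (latLen u 0 4 : ℝ) / ((latLen u 0 4 : ℝ) - (rmod u 0 4 4 : ℝ)) = 11/8 := by
        show (latLen u 0 4 : ℝ) / ((latLen u 0 4 : ℝ) - ((latLen u 0 4 % 4 : ℕ) : ℝ)) = 11/8
        rw [h04]; norm_num
      have s40 : (latLen u 4 0 : ℝ) / ((latLen u 4 0 : ℝ) - (rmod u 4 0 3 : ℝ)) = 11/9 :=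
        (cexpr_symm u 4 0 3).trans v04
      have hinv4 : ((latLen u 0 4 : ℝ))⁻¹ = 1/11 := by rw [h04]; norm_num
      rcases arith11 (lam 0) (lam 1) (lam 2) (lam 3) (lam 4)
        (hl0 0) (hl0 1) (hl0 2) (hl0 3) (hl0 4) hsum5 with hB | hC | hA1 | hA2 | hA3 | hA4 | hD | hE
      · refine Or.inl (Or.inl (Or.inl (Set.mem_iUnion.mpr ⟨0, mem_dil u 0 3 (hLr3 0) lam hl0 hl1 ?_⟩)))
        rw [erase_sum0, v01, v02, v03, v04]
        linarith
      · refine Or.inl (Or.inl (Or.inr (mem_dil u 0 4 hLr4 lam hl0 hl1 ?_)))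
        rw [erase_sum0, w01, w02, w03, w04]
        linarith
      · refine Or.inl (Or.inl (Or.inl (Set.mem_iUnion.mpr ⟨1, mem_dil u 1 3 (hLr3 1) lam hl0 hl1 ?_⟩)))
        rw [erase_sum1]
        have t0 := mul_le_mul_of_nonneg_right s10.le (hl0 0)
        have t2 := mul_le_mul_of_nonneg_right (b43 1 2 (by decide)) (hl0 2)
        have t3 := mul_le_mul_of_nonneg_right (b119 1 3 (by decide) o13) (hl0 3)
        have t4 := mul_le_mul_of_nonneg_right (b119 1 4 (by decide) o14) (hl0 4)
        linarith
      · refine Or.inl (Or.inl (Or.inl (Set.mem_iUnion.mpr ⟨2, mem_dil u 2 3 (hLr3 2) lam hl0 hl1 ?_⟩)))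
        rw [erase_sum2]
        have t0 := mul_le_mul_of_nonneg_right s20.le (hl0 0)
        have t1 := mul_le_mul_of_nonneg_right (b43 2 1 (by decide)) (hl0 1)
        have t3 := mul_le_mul_of_nonneg_right (b119 2 3 (by decide) o23) (hl0 3)
        have t4 := mul_le_mul_of_nonneg_right (b119 2 4 (by decide) o24) (hl0 4)
        linarith
      · refine Or.inl (Or.inl (Or.inl (Set.mem_iUnion.mpr ⟨3, mem_dil u 3 3 (hLr3 3) lam hl0 hl1 ?_⟩)))
        rw [erase_sum3]
        have t0 := mul_le_mul_of_nonneg_right s30.le (hl0 0)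
        have t1 := mul_le_mul_of_nonneg_right (b119 3 1 (by decide) o31) (hl0 1)
        have t2 := mul_le_mul_of_nonneg_right (b119 3 2 (by decide) o32) (hl0 2)
        have t4 := mul_le_mul_of_nonneg_right (b43 3 4 (by decide)) (hl0 4)
        linarith
      · refine Or.inl (Or.inl (Or.inl (Set.mem_iUnion.mpr ⟨4, mem_dil u 4 3 (hLr3 4) lam hl0 hl1 ?_⟩)))
        rw [erase_sum4]
        have t0 := mul_le_mul_of_nonneg_right s40.le (hl0 0)
        have t1 := mul_le_mul_of_nonneg_right (b119 4 1 (by decide) o41) (hl0 1)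
        have t2 := mul_le_mul_of_nonneg_right (b119 4 2 (by decide) o42) (hl0 2)
        have t3 := mul_le_mul_of_nonneg_right (b43 4 3 (by decide)) (hl0 3)
        linarith
      · obtain ⟨hD1, hD2⟩ := hD
        refine Or.inl (Or.inr (mem_dilT' u 3 4 (by decide) (hLr3 0) lam hl0 hl1 ?_ ?_))
        · rw [hinv4]; linarith
        · rw [erase_sum0, v01, v02, v03, v04, hinv4]; linarith
      · obtain ⟨hE1, hE2⟩ := hE
        refine Or.inr (mem_dilT' u 3 3 (by decide) (hLr3 0) lam hl0 hl1 ?_ ?_)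
        · rw [hinv3]; linarith
        · rw [erase_sum0, v01, v02, v03, v04, hinv3]; linarith
    · -- case latLen u 0 4 = 14
      have e04 : 2 ∣ latLen u 0 4 := by omega
      have o43 : ¬ 2 ∣ latLen u 4 3 := parity3 u 0 4 3 e04 o03
      have o34 : ¬ 2 ∣ latLen u 3 4 := by rw [latLen_symm]; exact o43
      have v04 : (latLen u 0 4 : ℝ) / ((latLen u 0 4 : ℝ) - (rmod u 0 4 3 : ℝ)) = 7/6 := by
        show (latLen u 0 4 : ℝ) / ((latLen u 0 4 : ℝ) - ((latLen u 0 4 % 3 : ℕ) : ℝ)) = 7/6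
        rw [h04]; norm_num
      have w04 : (latLen u 0 4 : ℝ) / ((latLen u 0 4 : ℝ) - (rmod u 0 4 4 : ℝ)) = 7/6 := by
        show (latLen u 0 4 : ℝ) / ((latLen u 0 4 : ℝ) - ((latLen u 0 4 % 4 : ℕ) : ℝ)) = 7/6
        rw [h04]; norm_num
      have s40 : (latLen u 4 0 : ℝ) / ((latLen u 4 0 : ℝ) - (rmod u 4 0 3 : ℝ)) = 7/6 :=
        (cexpr_symm u 4 0 3).trans v04
      have hinv4 : ((latLen u 0 4 : ℝ))⁻¹ = 1/14 := by rw [h04]; norm_num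
      rcases arith14 (lam 0) (lam 1) (lam 2) (lam 3) (lam 4)
        (hl0 0) (hl0 1) (hl0 2) (hl0 3) (hl0 4) hsum5 with hB | hC | hA1 | hA2 | hA3 | hA4 | hD | hE
      · refine Or.inl (Or.inl (Or.inl (Set.mem_iUnion.mpr ⟨0, mem_dil u 0 3 (hLr3 0) lam hl0 hl1 ?_⟩)))
        rw [erase_sum0, v01, v02, v03, v04]
        linarith
      · refine Or.inl (Or.inl (Or.inr (mem_dil u 0 4 hLr4 lam hl0 hl1 ?_)))
        rw [erase_sum0, w01, w02, w03, w04]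
        linarith
      · refine Or.inl (Or.inl (Or.inl (Set.mem_iUnion.mpr ⟨1, mem_dil u 1 3 (hLr3 1) lam hl0 hl1 ?_⟩)))
        rw [erase_sum1]
        have t0 := mul_le_mul_of_nonneg_right s10.le (hl0 0)
        have t2 := mul_le_mul_of_nonneg_right (b43 1 2 (by decide)) (hl0 2)
        have t3 := mul_le_mul_of_nonneg_right (b119 1 3 (by decide) o13) (hl0 3)
        have t4 := mul_le_mul_of_nonneg_right (b43 1 4 (by decide)) (hl0 4)
        linarith
      · refine Or.inl (Or.inl (Or.inl (Set.mem_iUnion.mpr ⟨2, mem_dil u 2 3 (hLr3 2) lam hl0 hl1 ?_⟩)))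
        rw [erase_sum2]
        have t0 := mul_le_mul_of_nonneg_right s20.le (hl0 0)
        have t1 := mul_le_mul_of_nonneg_right (b43 2 1 (by decide)) (hl0 1)
        have t3 := mul_le_mul_of_nonneg_right (b119 2 3 (by decide) o23) (hl0 3)
        have t4 := mul_le_mul_of_nonneg_right (b43 2 4 (by decide)) (hl0 4)
        linarith
      · refine Or.inl (Or.inl (Or.inl (Set.mem_iUnion.mpr ⟨3, mem_dil u 3 3 (hLr3 3) lam hl0 hl1 ?_⟩)))
        rw [erase_sum3]
        have t0 := mul_le_mul_of_nonneg_right s30.le (hl0 0)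
        have t1 := mul_le_mul_of_nonneg_right (b119 3 1 (by decide) o31) (hl0 1)
        have t2 := mul_le_mul_of_nonneg_right (b119 3 2 (by decide) o32) (hl0 2)
        have t4 := mul_le_mul_of_nonneg_right (b119 3 4 (by decide) o34) (hl0 4)
        linarith
      · refine Or.inl (Or.inl (Or.inl (Set.mem_iUnion.mpr ⟨4, mem_dil u 4 3 (hLr3 4) lam hl0 hl1 ?_⟩)))
        rw [erase_sum4]
        have t0 := mul_le_mul_of_nonneg_right s40.le (hl0 0)
        have t1 := mul_le_mul_of_nonneg_right (b43 4 1 (by decide)) (hl0 1)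
        have t2 := mul_le_mul_of_nonneg_right (b43 4 2 (by decide)) (hl0 2)
        have t3 := mul_le_mul_of_nonneg_right (b119 4 3 (by decide) o43) (hl0 3)
        linarith
      · obtain ⟨hD1, hD2⟩ := hD
        refine Or.inl (Or.inr (mem_dilT' u 3 4 (by decide) (hLr3 0) lam hl0 hl1 ?_ ?_))
        · rw [hinv4]; linarith
        · rw [erase_sum0, v01, v02, v03, v04, hinv4]; linarith
      · obtain ⟨hE1, hE2⟩ := hE
        refine Or.inr (mem_dilT' u 3 3 (by decide) (hLr3 0) lam hl0 hl1 ?_ ?_)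
        · rw [hinv3]; linarith
        · rw [erase_sum0, v01, v02, v03, v04, hinv3]; linarith
    · -- case latLen u 0 4 = 17
      have o04 : ¬ 2 ∣ latLen u 0 4 := by omega
      have o14 : ¬ 2 ∣ latLen u 1 4 := parity3 u 0 1 4 e01 o04
      have o24 : ¬ 2 ∣ latLen u 2 4 := parity3 u 0 2 4 e02 o04
      have o41 : ¬ 2 ∣ latLen u 4 1 := by rw [latLen_symm]; exact o14
      have o42 : ¬ 2 ∣ latLen u 4 2 := by rw [latLen_symm]; exact o24
      have v04 : (latLen u 0 4 : ℝ) / ((latLen u 0 4 : ℝ) - (rmod u 0 4 3 : ℝ)) = 17/15 := by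
        show (latLen u 0 4 : ℝ) / ((latLen u 0 4 : ℝ) - ((latLen u 0 4 % 3 : ℕ) : ℝ)) = 17/15
        rw [h04]; norm_num
      have w04 : (latLen u 0 4 : ℝ) / ((latLen u 0 4 : ℝ) - (rmod u 0 4 4 : ℝ)) = 17/16 := by
        show (latLen u 0 4 : ℝ) / ((latLen u 0 4 : ℝ) - ((latLen u 0 4 % 4 : ℕ) : ℝ)) = 17/16
        rw [h04]; norm_num
      have s40 : (latLen u 4 0 : ℝ) / ((latLen u 4 0 : ℝ) - (rmod u 4 0 3 : ℝ)) = 17/15 :=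
        (cexpr_symm u 4 0 3).trans v04
      have hinv4 : ((latLen u 0 4 : ℝ))⁻¹ = 1/17 := by rw [h04]; norm_num
      rcases arith17 (lam 0) (lam 1) (lam 2) (lam 3) (lam 4)
        (hl0 0) (hl0 1) (hl0 2) (hl0 3) (hl0 4) hsum5 with hB | hC | hA1 | hA2 | hA3 | hA4 | hD | hE
      · refine Or.inl (Or.inl (Or.inl (Set.mem_iUnion.mpr ⟨0, mem_dil u 0 3 (hLr3 0) lam hl0 hl1 ?_⟩)))
        rw [erase_sum0, v01, v02, v03, v04]
        linarith
      · refine Or.inl (Or.inl (Or.inr (mem_dil u 0 4 hLr4 lam hl0 hl1 ?_)))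
        rw [erase_sum0, w01, w02, w03, w04]
        linarith
      · refine Or.inl (Or.inl (Or.inl (Set.mem_iUnion.mpr ⟨1, mem_dil u 1 3 (hLr3 1) lam hl0 hl1 ?_⟩)))
        rw [erase_sum1]
        have t0 := mul_le_mul_of_nonneg_right s10.le (hl0 0)
        have t2 := mul_le_mul_of_nonneg_right (b43 1 2 (by decide)) (hl0 2)
        have t3 := mul_le_mul_of_nonneg_right (b119 1 3 (by decide) o13) (hl0 3)
        have t4 := mul_le_mul_of_nonneg_right (b119 1 4 (by decide) o14) (hl0 4)
        linarith
      · refine Or.inl (Or.inl (Or.inl (Set.mem_iUnion.mpr ⟨2, mem_dil u 2 3 (hLr3 2) lam hl0 hl1 ?_⟩)))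
        rw [erase_sum2]
        have t0 := mul_le_mul_of_nonneg_right s20.le (hl0 0)
        have t1 := mul_le_mul_of_nonneg_right (b43 2 1 (by decide)) (hl0 1)
        have t3 := mul_le_mul_of_nonneg_right (b119 2 3 (by decide) o23) (hl0 3)
        have t4 := mul_le_mul_of_nonneg_right (b119 2 4 (by decide) o24) (hl0 4)
        linarith
      · refine Or.inl (Or.inl (Or.inl (Set.mem_iUnion.mpr ⟨3, mem_dil u 3 3 (hLr3 3) lam hl0 hl1 ?_⟩)))
        rw [erase_sum3]
        have t0 := mul_le_mul_of_nonneg_right s30.le (hl0 0)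
        have t1 := mul_le_mul_of_nonneg_right (b119 3 1 (by decide) o31) (hl0 1)
        have t2 := mul_le_mul_of_nonneg_right (b119 3 2 (by decide) o32) (hl0 2)
        have t4 := mul_le_mul_of_nonneg_right (b43 3 4 (by decide)) (hl0 4)
        linarith
      · refine Or.inl (Or.inl (Or.inl (Set.mem_iUnion.mpr ⟨4, mem_dil u 4 3 (hLr3 4) lam hl0 hl1 ?_⟩)))
        rw [erase_sum4]
        have t0 := mul_le_mul_of_nonneg_right s40.le (hl0 0)
        have t1 := mul_le_mul_of_nonneg_right (b119 4 1 (by decide) o41) (hl0 1)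
        have t2 := mul_le_mul_of_nonneg_right (b119 4 2 (by decide) o42) (hl0 2)
        have t3 := mul_le_mul_of_nonneg_right (b43 4 3 (by decide)) (hl0 3)
        linarith
      · obtain ⟨hD1, hD2⟩ := hD
        refine Or.inl (Or.inr (mem_dilT' u 3 4 (by decide) (hLr3 0) lam hl0 hl1 ?_ ?_))
        · rw [hinv4]; linarith
        · rw [erase_sum0, v01, v02, v03, v04, hinv4]; linarith
      · obtain ⟨hE1, hE2⟩ := hE
        refine Or.inr (mem_dilT' u 3 3 (by decide) (hLr3 0) lam hl0 hl1 ?_ ?_)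
        · rw [hinv3]; linarith
        · rw [erase_sum0, v01, v02, v03, v04, hinv3]; linarith
  · intro hx
    rcases hx with ((h | h) | h) | h
    · rw [Set.mem_iUnion] at h
      obtain ⟨i, hi⟩ := h
      exact dil_subset u i 3 (hLr3 i) hi
    · exact dil_subset u 0 4 hLr4 h
    · refine dilT_subset u 3 4 (by decide) (hLr3 0) ?_ h
      intro j hj
      have hi4 : (latLen u 0 4 : ℝ)⁻¹ ≤ 1/7 := by
        rcases h04 with h4 | h4 | h4 | h4 <;> rw [h4] <;> norm_num
      fin_cases j
      · simp at hj
      · show (latLen u 0 (4 : Fin 5) : ℝ)⁻¹ ≤ ((latLen u 0 1 % 3 : ℕ) : ℝ) / (latLen u 0 1 : ℝ)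
        have he : ((latLen u 0 1 % 3 : ℕ) : ℝ) / (latLen u 0 1 : ℝ) = 1/4 := by
          rcases h01 with h1 | h1 <;> rw [h1] <;> norm_num
        rw [he]; linarith
      · show (latLen u 0 (4 : Fin 5) : ℝ)⁻¹ ≤ ((latLen u 0 2 % 3 : ℕ) : ℝ) / (latLen u 0 2 : ℝ)
        have he : ((latLen u 0 2 % 3 : ℕ) : ℝ) / (latLen u 0 2 : ℝ) = 1/4 := by
          rcases h02 with h1 | h1 <;> rw [h1] <;> norm_num
        rw [he]; linarith
      · show (latLen u 0 (4 : Fin 5) : ℝ)⁻¹ ≤ ((latLen u 0 3 % 3 : ℕ) : ℝ) / (latLen u 0 3 : ℝ)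
        have he : ((latLen u 0 3 % 3 : ℕ) : ℝ) / (latLen u 0 3 : ℝ) = 2/11 := by
          rw [h03] <;> norm_num
        rw [he]; linarith
      · show (latLen u 0 (4 : Fin 5) : ℝ)⁻¹ ≤ ((latLen u 0 4 % 3 : ℕ) : ℝ) / (latLen u 0 4 : ℝ)
        rcases h04 with h4 | h4 | h4 | h4 <;> rw [h4] <;> norm_num
    · refine dilT_subset u 3 3 (by decide) (hLr3 0) ?_ h
      intro j hj
      fin_cases j
      · simp at hj
      · show (latLen u 0 (3 : Fin 5) : ℝ)⁻¹ ≤ ((latLen u 0 1 % 3 : ℕ) : ℝ) / (latLen u 0 1 : ℝ)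
        rw [hinv3]
        have he : ((latLen u 0 1 % 3 : ℕ) : ℝ) / (latLen u 0 1 : ℝ) = 1/4 := by
          rcases h01 with h1 | h1 <;> rw [h1] <;> norm_num
        rw [he]; norm_num
      · show (latLen u 0 (3 : Fin 5) : ℝ)⁻¹ ≤ ((latLen u 0 2 % 3 : ℕ) : ℝ) / (latLen u 0 2 : ℝ)
        rw [hinv3]
        have he : ((latLen u 0 2 % 3 : ℕ) : ℝ) / (latLen u 0 2 : ℝ) = 1/4 := by
          rcases h02 with h1 | h1 <;> rw [h1] <;> norm_num
        rw [he]; norm_num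
      · show (latLen u 0 (3 : Fin 5) : ℝ)⁻¹ ≤ ((latLen u 0 3 % 3 : ℕ) : ℝ) / (latLen u 0 3 : ℝ)
        rw [hinv3, h03]
        norm_num
      · show (latLen u 0 (3 : Fin 5) : ℝ)⁻¹ ≤ ((latLen u 0 4 % 3 : ℕ) : ℝ) / (latLen u 0 4 : ℝ)
        rw [hinv3]
        rcases h04 with h4 | h4 | h4 | h4 <;> rw [h4] <;> norm_num
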